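/- For any unit-trace positive definite symmetric matrix B and any vectors v_0, …, v_K ∈ ℝ^n, tr(√(δ² I + Σ_{k=0}^K v_k v_k^T)) ≤ δ n + √(Σ_{k=0}^K ‖v_k‖²_{B^{-1}}), where ‖v‖²_{B^{-1}} = ⟨v, B^{-1} v⟩ and n is the dimension. -/

import Mathlib

open Matrix
open scoped Classical

/-- The positive semidefinite square root of a matrix (zero if not PSD). -/
noncomputable def sqrtM {n : ℕ} (A : Matrix (Fin n) (Fin n) ℝ) : Matrix (Fin n) (Fin n) ℝ :=
  if h : A.PosSemidef then
    (h.1.eigenvectorUnitary : Matrix (Fin n) (Fin n) ℝ) *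
      diagonal ((↑) ∘ (fun i => Real.sqrt (h.1.eigenvalues i))) *
      (star h.1.eigenvectorUnitary : Matrix (Fin n) (Fin n) ℝ)
  else 0

/-- Euclidean norm of a vector. -/
noncomputable def euclNorm {n : ℕ} (v : Fin n → ℝ) : ℝ := Real.sqrt (v ⬝ᵥ v)

/-- The ℓ₂ operator (spectral) norm of a matrix. -/
noncomputable def opNorm {n : ℕ} (A : Matrix (Fin n) (Fin n) ℝ) : ℝ :=
  ⨆ u : {u : Fin n → ℝ // euclNorm u ≤ 1}, euclNorm (A *ᵥ u)

private lemma traceMulDiag {n : ℕ} (X : Matrix (Fin n) (Fin n) ℝ) (d : Fin n → ℝ) :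
    (X * diagonal d).trace = ∑ i, X i i * d i := by
  simp [Matrix.trace, Matrix.diag, Matrix.mul_diagonal]

private lemma traceMulVecMulVec {n : ℕ} (X : Matrix (Fin n) (Fin n) ℝ) (w : Fin n → ℝ) :
    (X * vecMulVec w w).trace = w ⬝ᵥ (X *ᵥ w) := by
  simp only [Matrix.trace, Matrix.diag, Matrix.mul_apply, vecMulVec_apply, dotProduct,
    mulVec, Finset.mul_sum]
  exact Finset.sum_congr rfl fun i _ => Finset.sum_congr rfl fun j _ => by ring

private lemma entryEq {n : ℕ} (U X : Matrix (Fin n) (Fin n) ℝ) (i : Fin n) :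
    (star U * X * U) i i = (fun j => U j i) ⬝ᵥ (X *ᵥ (fun j => U j i)) := by
  simp only [Matrix.mul_apply, Matrix.star_apply, star_trivial, dotProduct, mulVec,
    Finset.sum_mul, Finset.mul_sum]
  rw [Finset.sum_comm]
  exact Finset.sum_congr rfl fun j _ => Finset.sum_congr rfl fun k _ => by ring

private lemma vecMulVecPsd {n : ℕ} (w : Fin n → ℝ) : (vecMulVec w w).PosSemidef := by
  refine Matrix.PosSemidef.of_dotProduct_mulVec_nonneg ?_ ?_
  · ext i j; simp [vecMulVec_apply, conjTranspose_apply, mul_comm]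
  · intro x
    have h : vecMulVec w w *ᵥ x = (w ⬝ᵥ x) • w := by
      ext i
      simp only [vecMulVec_apply, mulVec, dotProduct, Pi.smul_apply, smul_eq_mul,
        Finset.sum_mul, Finset.mul_sum]
      exact Finset.sum_congr rfl fun j _ => by ring
    rw [h]
    simp only [star_trivial, dotProduct_smul, smul_eq_mul]
    rw [dotProduct_comm]
    exact mul_self_nonneg _

private lemma auxBC {n : ℕ} {B : Matrix (Fin n) (Fin n) ℝ} (hB : B.PosDef) (w : Fin n → ℝ)
    (hw : w ⬝ᵥ w = 1) :
    1 ≤ (w ⬝ᵥ (B *ᵥ w)) * (w ⬝ᵥ (B⁻¹ *ᵥ w)) := by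
  have hBu : IsUnit B.det := (Matrix.isUnit_iff_isUnit_det B).mp hB.isUnit
  set y := B⁻¹ *ᵥ w with hydef
  have hBy : B *ᵥ y = w := by
    rw [hydef, Matrix.mulVec_mulVec, Matrix.mul_nonsing_inv _ hBu, Matrix.one_mulVec]
  have hsymm : Bᵀ = B := by
    have := hB.1
    rw [← Matrix.conjTranspose_eq_transpose_of_trivial]; exact this
  have hwne : w ≠ 0 := by rintro rfl; simp at hw
  have hc : 0 < w ⬝ᵥ y := by simpa using hB.inv.dotProduct_mulVec_pos hwne
  have hyBy : y ⬝ᵥ (B *ᵥ y) = w ⬝ᵥ y := by rw [hBy, dotProduct_comm]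
  have hwBy : w ⬝ᵥ (B *ᵥ y) = 1 := by rw [hBy, hw]
  have hyBw : y ⬝ᵥ (B *ᵥ w) = 1 := by
    rw [Matrix.dotProduct_mulVec, ← Matrix.mulVec_transpose, hsymm, hBy, hw]
  have hz := hB.posSemidef.dotProduct_mulVec_nonneg ((w ⬝ᵥ y) • w - y)
  simp only [star_trivial, Matrix.mulVec_sub, Matrix.mulVec_smul, dotProduct_sub,
    sub_dotProduct, smul_dotProduct, dotProduct_smul, smul_eq_mul, hyBy, hwBy, hyBw] at hz
  nlinarith [hc]

private lemma auxSumSqrt {n : ℕ} (μ c b : Fin n → ℝ) (hμ : ∀ i, 0 ≤ μ i)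
    (hc : ∀ i, 0 < c i) (hbc : ∀ i, 1 ≤ b i * c i) (hb1 : ∑ i, b i = 1) :
    ∑ i, Real.sqrt (μ i) ≤ Real.sqrt (∑ i, μ i * c i) := by
  have h1 : ∀ i, Real.sqrt (μ i) = Real.sqrt (μ i * c i) * Real.sqrt (1 / c i) := by
    intro i
    rw [← Real.sqrt_mul (mul_nonneg (hμ i) (hc i).le)]
    congr 1
    field_simp
    rw [mul_div_assoc, div_self (hc i).ne', mul_one]
  calc ∑ i, Real.sqrt (μ i) = ∑ i, Real.sqrt (μ i * c i) * Real.sqrt (1 / c i) := by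
        simp_rw [h1]
    _ ≤ Real.sqrt (∑ i, μ i * c i) * Real.sqrt (∑ i, 1 / c i) :=
        Real.sum_sqrt_mul_sqrt_le _ (fun i => mul_nonneg (hμ i) (hc i).le)
          (fun i => (one_div_nonneg).mpr (hc i).le)
    _ ≤ Real.sqrt (∑ i, μ i * c i) * Real.sqrt 1 := by
        gcongr
        calc ∑ i, 1 / c i ≤ ∑ i, b i := Finset.sum_le_sum fun i _ => by
              rw [div_le_iff₀ (hc i)]
              simpa [one_mul] using hbc i
          _ = 1 := hb1
    _ = Real.sqrt (∑ i, μ i * c i) := by rw [Real.sqrt_one, mul_one]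

theorem trace_sqrt_accumulator_bound {n K : ℕ} {δ : ℝ} (hδ : 0 < δ)
    {B : Matrix (Fin n) (Fin n) ℝ} (hB : B.PosDef) (htr : B.trace = 1)
    (v : ℕ → (Fin n → ℝ)) :
    (sqrtM (δ ^ 2 • (1 : Matrix (Fin n) (Fin n) ℝ)
        + ∑ k ∈ Finset.range (K + 1), vecMulVec (v k) (v k))).trace
      ≤ δ * n + Real.sqrt (∑ k ∈ Finset.range (K + 1), v k ⬝ᵥ (B⁻¹ *ᵥ v k)) := by
  set S : Matrix (Fin n) (Fin n) ℝ := ∑ k ∈ Finset.range (K + 1), vecMulVec (v k) (v k)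
    with hSdef
  have hS : S.PosSemidef := by
    rw [hSdef]
    exact Finset.sum_induction _ _ (fun a b ha hb => ha.add hb)
      (Matrix.PosSemidef.zero) (fun k _ => vecMulVecPsd (v k))
  have hA : (δ ^ 2 • (1 : Matrix (Fin n) (Fin n) ℝ) + S).PosSemidef := by
    refine Matrix.PosSemidef.add ?_ hS
    have h : (δ ^ 2 • (1 : Matrix (Fin n) (Fin n) ℝ)) = diagonal (fun _ => δ ^ 2) := by
      ext i j; by_cases h : i = j <;> simp [Matrix.one_apply, h, diagonal]
    rw [h]
    exact Matrix.PosSemidef.diagonal (fun i => sq_nonneg δ)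
  set U : Matrix (Fin n) (Fin n) ℝ := (hA.1.eigenvectorUnitary : Matrix (Fin n) (Fin n) ℝ)
    with hUdef
  set μ : Fin n → ℝ := fun i => hA.1.eigenvalues i - δ ^ 2 with hμdef
  have hUU : star U * U = 1 := Matrix.mem_unitaryGroup_iff'.mp (hA.1.eigenvectorUnitary).2
  have hUU' : U * star U = 1 := Matrix.mem_unitaryGroup_iff.mp (hA.1.eigenvectorUnitary).2
  have hspecA : δ ^ 2 • (1 : Matrix (Fin n) (Fin n) ℝ) + S
      = U * diagonal hA.1.eigenvalues * star U := by
    have := hA.1.spectral_theorem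
    simpa using this
  have hspec : S = U * diagonal μ * star U := by
    have h4 : (diagonal μ : Matrix (Fin n) (Fin n) ℝ)
        = diagonal hA.1.eigenvalues - δ ^ 2 • 1 := by
      ext i j; by_cases h : i = j <;> simp [diagonal, Matrix.one_apply, h, hμdef]
    rw [h4, Matrix.mul_sub, Matrix.sub_mul, ← hspecA, Matrix.mul_smul, Matrix.mul_one,
      Matrix.smul_mul, hUU']
    abel
  have hμ0 : ∀ i, 0 ≤ μ i := by
    intro i
    have hd : star U * S * U = diagonal μ := by
      rw [hspec]
      simp only [← Matrix.mul_assoc, hUU, Matrix.one_mul]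
      rw [Matrix.mul_assoc, hUU, Matrix.mul_one]
    have he := entryEq U S i
    rw [hd, diagonal_apply_eq] at he
    rw [he]
    simpa using hS.dotProduct_mulVec_nonneg (fun j => U j i)
  have hsqA : sqrtM (δ ^ 2 • (1 : Matrix (Fin n) (Fin n) ℝ) + S)
      = U * diagonal (fun i => Real.sqrt (δ ^ 2 + μ i)) * star U := by
    rw [sqrtM, dif_pos hA]
    congr 2
    ext i j
    simp [hμdef, diagonal]
  clear_value U μ
  set D : Matrix (Fin n) (Fin n) ℝ := diagonal (fun i => Real.sqrt (δ ^ 2 + μ i)) with hDdef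
  set M : Matrix (Fin n) (Fin n) ℝ := U * D * star U with hMdef
  have hDpsd : D.PosSemidef := Matrix.PosSemidef.diagonal (fun i => Real.sqrt_nonneg _)
  have hMpsd : M.PosSemidef := by
    have := hDpsd.mul_mul_conjTranspose_same U
    rw [Matrix.star_eq_conjTranspose U] at hMdef
    rwa [← hMdef] at this
  clear_value D M
  have hM2 : M ^ 2 = δ ^ 2 • 1 + S := by
    have hDD : D * D = diagonal (fun i => δ ^ 2 + μ i) := by
      have he : (fun i => Real.sqrt (δ ^ 2 + μ i) * Real.sqrt (δ ^ 2 + μ i))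
          = fun i => δ ^ 2 + μ i :=
        funext fun i => Real.mul_self_sqrt (add_nonneg (sq_nonneg δ) (hμ0 i))
      rw [hDdef, diagonal_mul_diagonal, he]
    have h1 : M * M = U * (D * (star U * (U * (D * star U)))) := by
      simp only [hMdef, Matrix.mul_assoc]
    rw [← Matrix.mul_assoc (star U) U, hUU, Matrix.one_mul] at h1
    have h2 : δ ^ 2 • (1 : Matrix (Fin n) (Fin n) ℝ) + S
        = U * diagonal (fun i => δ ^ 2 + μ i) * star U := by
      have h3 : (δ ^ 2 • (1 : Matrix (Fin n) (Fin n) ℝ)) = U * (δ ^ 2 • 1) * star U := by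
        rw [Matrix.mul_smul, Matrix.mul_one, Matrix.smul_mul, hUU']
      have h4 : (diagonal (fun i => δ ^ 2 + μ i) : Matrix (Fin n) (Fin n) ℝ)
          = δ ^ 2 • 1 + diagonal μ := by
        ext i j; by_cases h : i = j <;> simp [diagonal, Matrix.one_apply, h]
      rw [h4, Matrix.mul_add, Matrix.add_mul, ← h3, ← hspec]
    rw [pow_two, h1, ← Matrix.mul_assoc D D, hDD, h2, Matrix.mul_assoc]
  -- identification of the square root
  have hsq : sqrtM (δ ^ 2 • (1 : Matrix (Fin n) (Fin n) ℝ) + S) = M := by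
    rw [hsqA, hMdef, hDdef]
  have htrM : M.trace = ∑ i, Real.sqrt (δ ^ 2 + μ i) := by
    rw [hMdef, Matrix.trace_mul_comm, ← Matrix.mul_assoc, hUU, Matrix.one_mul, hDdef,
      Matrix.trace_diagonal]
  -- orthonormality of the columns of U
  have hw1 : ∀ i, (fun j => U j i) ⬝ᵥ (fun j => U j i) = 1 := by
    intro i
    have h := congrFun (congrFun hUU i) i
    simpa [Matrix.mul_apply, Matrix.one_apply, dotProduct, Matrix.star_apply] using h
  have hwne : ∀ i, (fun j => U j i) ≠ 0 := by
    intro i h0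
    have h := hw1 i
    rw [h0] at h
    simp [dotProduct] at h
  -- the quantities b i and c i
  have hcpos : ∀ i, 0 < (fun j => U j i) ⬝ᵥ (B⁻¹ *ᵥ (fun j => U j i)) := by
    intro i
    simpa using hB.inv.dotProduct_mulVec_pos (hwne i)
  have hbc : ∀ i, 1 ≤ ((fun j => U j i) ⬝ᵥ (B *ᵥ (fun j => U j i)))
      * ((fun j => U j i) ⬝ᵥ (B⁻¹ *ᵥ (fun j => U j i))) :=
    fun i => auxBC hB _ (hw1 i)
  have hb1 : ∑ i, (fun j => U j i) ⬝ᵥ (B *ᵥ (fun j => U j i)) = 1 := by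
    calc ∑ i, (fun j => U j i) ⬝ᵥ (B *ᵥ (fun j => U j i))
        = ∑ i, (star U * B * U) i i := Finset.sum_congr rfl fun i _ => (entryEq U B i).symm
      _ = (star U * B * U).trace := by simp [Matrix.trace, Matrix.diag]
      _ = (U * star U * B).trace := by
          rw [Matrix.trace_mul_comm, ← Matrix.mul_assoc]
      _ = B.trace := by rw [hUU', Matrix.one_mul]
      _ = 1 := htr
  -- the key trace computation
  have hμc : ∑ i, μ i * ((fun j => U j i) ⬝ᵥ (B⁻¹ *ᵥ (fun j => U j i)))
      = ∑ k ∈ Finset.range (K + 1), v k ⬝ᵥ (B⁻¹ *ᵥ v k) := by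
    have h1 : (B⁻¹ * S).trace = ∑ k ∈ Finset.range (K + 1), v k ⬝ᵥ (B⁻¹ *ᵥ v k) := by
      rw [hSdef, Matrix.mul_sum, Matrix.trace_sum]
      exact Finset.sum_congr rfl fun k _ => traceMulVecMulVec B⁻¹ (v k)
    have h2 : (B⁻¹ * S).trace
        = ∑ i, μ i * ((fun j => U j i) ⬝ᵥ (B⁻¹ *ᵥ (fun j => U j i))) := by
      calc (B⁻¹ * S).trace = ((B⁻¹ * U) * diagonal μ * star U).trace := by
            rw [hspec, ← Matrix.mul_assoc, ← Matrix.mul_assoc]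
        _ = (star U * (B⁻¹ * U) * diagonal μ).trace := by
            rw [Matrix.trace_mul_comm, ← Matrix.mul_assoc]
        _ = ∑ i, (star U * B⁻¹ * U) i i * μ i := by
            rw [← Matrix.mul_assoc, traceMulDiag]
        _ = ∑ i, μ i * ((fun j => U j i) ⬝ᵥ (B⁻¹ *ᵥ (fun j => U j i))) :=
            Finset.sum_congr rfl fun i _ => by rw [entryEq U B⁻¹ i, mul_comm]
    rw [← h2, h1]
  -- putting everything together
  rw [hsq, htrM]
  have step1 : ∑ i, Real.sqrt (δ ^ 2 + μ i) ≤ (δ * n) + ∑ i, Real.sqrt (μ i) := by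
    have h : ∀ i : Fin n, Real.sqrt (δ ^ 2 + μ i) ≤ δ + Real.sqrt (μ i) := by
      intro i
      have hle : δ ^ 2 + μ i ≤ (δ + Real.sqrt (μ i)) ^ 2 := by
        nlinarith [Real.sq_sqrt (hμ0 i), Real.sqrt_nonneg (μ i)]
      calc Real.sqrt (δ ^ 2 + μ i) ≤ Real.sqrt ((δ + Real.sqrt (μ i)) ^ 2) :=
            Real.sqrt_le_sqrt hle
        _ = δ + Real.sqrt (μ i) :=
            Real.sqrt_sq (add_nonneg hδ.le (Real.sqrt_nonneg _))
    calc ∑ i, Real.sqrt (δ ^ 2 + μ i) ≤ ∑ i : Fin n, (δ + Real.sqrt (μ i)) :=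
          Finset.sum_le_sum fun i _ => h i
      _ = (δ * n) + ∑ i, Real.sqrt (μ i) := by
          rw [Finset.sum_add_distrib]
          simp [Finset.sum_const, Finset.card_univ, nsmul_eq_mul, mul_comm]
  have step2 : ∑ i, Real.sqrt (μ i)
      ≤ Real.sqrt (∑ k ∈ Finset.range (K + 1), v k ⬝ᵥ (B⁻¹ *ᵥ v k)) := by
    rw [← hμc]
    exact auxSumSqrt μ _ _ hμ0 hcpos hbc hb1
  linarith
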